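/- If f ∈ 𝒮(ℝ) has support in (r,∞) for some r > 0, then the analytic continuation of f̂⁺ to the strip {0 ≤ Im β ≤ π} satisfies |f̂⁺(β+iλ)| ≤ c·e^{−r e^β sin λ} for all real β and λ ∈ [0,π], where c is a constant depending on f. -/

import Mathlib

open MeasureTheory Complex Filter Set

/-- The analytic continuation `f̂⁺(ζ) = i e^ζ f̃(e^ζ)` to complex `ζ`,
with `f̃(z) = (2π)^{−1/2} ∫ f(ξ) e^{izξ} dξ` the continued Fourier transform. -/
noncomputable def hatPlusC (f : ℝ → ℂ) (ζ : ℂ) : ℂ :=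
  Complex.I * Complex.exp ζ * ((Real.sqrt (2 * Real.pi) : ℂ)⁻¹ *
    ∫ x : ℝ, f x * Complex.exp (Complex.I * Complex.exp ζ * x))

/-- If Schwartz `f` is supported in `(r,∞)` with `r > 0`, then the
continuation of `f̂⁺` to the strip `{0 ≤ Im β ≤ π}` satisfies
`|f̂⁺(β+iλ)| ≤ c·e^{−r e^β sin λ}`. -/
theorem hatPlus_sharpened_bound
    (f : SchwartzMap ℝ ℂ) (r : ℝ) (hr : 0 < r)
    (hsupp : Function.support (f : ℝ → ℂ) ⊆ Set.Ioi r) :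
    ∃ c : ℝ, ∀ β lam : ℝ, 0 ≤ lam → lam ≤ Real.pi →
      ‖hatPlusC (fun x => f x) (β + lam * Complex.I)‖
        ≤ c * Real.exp (-(r * Real.exp β * Real.sin lam)) := by
  classical
  set f' : SchwartzMap ℝ ℂ := SchwartzMap.derivCLM ℝ ℂ f with hf'def
  refine ⟨(Real.sqrt (2 * Real.pi))⁻¹ * ∫ x : ℝ, ‖f' x‖, ?_⟩
  intro β lam hlam0 hlamπ
  set z : ℂ := Complex.exp ((β : ℂ) + (lam : ℂ) * Complex.I) with hz
  have hzabs : ‖z‖ = Real.exp β := by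
    rw [hz, Complex.norm_exp]; simp
  have hzim : z.im = Real.exp β * Real.sin lam := by
    rw [hz, Complex.exp_im]; simp
  have hsin : 0 ≤ Real.sin lam := Real.sin_nonneg_of_nonneg_of_le_pi hlam0 hlamπ
  have hzim0 : 0 ≤ z.im := by rw [hzim]; positivity
  have hz0 : z ≠ 0 := Complex.exp_ne_zero _
  -- The exponential factor
  set E : ℝ → ℂ := fun x => Complex.exp (Complex.I * z * x) with hE
  have hEnorm : ∀ x : ℝ, ‖E x‖ = Real.exp (-(z.im * x)) := by
    intro x
    rw [hE]
    simp only [Complex.norm_exp]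
    congr 1
    simp [Complex.mul_re, Complex.mul_im]
  have hEcont : Continuous E := by
    apply Complex.continuous_exp.comp
    exact (continuous_const.mul Complex.continuous_ofReal)
  have hEderiv : ∀ x : ℝ, HasDerivAt E (Complex.I * z * E x) x := by
    intro x
    have h1 : HasDerivAt (fun w : ℂ => Complex.exp (Complex.I * z * w))
        (Complex.exp (Complex.I * z * x) * (Complex.I * z * 1)) (x : ℂ) :=
      ((hasDerivAt_id (x : ℂ)).const_mul (Complex.I * z)).cexp
    have h2 := h1.comp_ofReal
    rw [hE]
    convert h2 using 1
    ring
  have hfd : ∀ x : ℝ, HasDerivAt (fun y => f y) (f' x) x := by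
    intro x
    have : f' x = deriv (fun y => f y) x := SchwartzMap.derivCLM_apply ℝ f x
    rw [this]
    exact (f.differentiableAt).hasDerivAt
  -- the function g = f * E and its derivative
  have hg : ∀ x : ℝ, HasDerivAt (fun y => f y * E y)
      (f' x * E x + f x * (Complex.I * z * E x)) x :=
    fun x => (hfd x).mul (hEderiv x)
  -- integrability facts
  have hEbnd : ∀ x ∈ Set.Ioi r, ‖E x‖ ≤ 1 := by
    intro x hx
    rw [hEnorm, Real.exp_le_one_iff, neg_nonpos]
    have : (0:ℝ) ≤ x := le_of_lt (lt_trans hr hx)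
    positivity
  have hint_fE : IntegrableOn (fun x => f x * E x) (Set.Ioi r) := by
    apply Integrable.mono' (f.integrable.norm.restrict (s := Set.Ioi r))
    · exact ((f.continuous.mul hEcont)).aestronglyMeasurable
    · filter_upwards [ae_restrict_mem measurableSet_Ioi] with x hx
      rw [norm_mul]
      calc ‖f x‖ * ‖E x‖ ≤ ‖f x‖ * 1 :=
            mul_le_mul_of_nonneg_left (hEbnd x hx) (norm_nonneg _)
        _ = ‖f x‖ := mul_one _
  have hint_f'E : IntegrableOn (fun x => f' x * E x) (Set.Ioi r) := by
    apply Integrable.mono' (f'.integrable.norm.restrict (s := Set.Ioi r))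
    · exact ((f'.continuous.mul hEcont)).aestronglyMeasurable
    · filter_upwards [ae_restrict_mem measurableSet_Ioi] with x hx
      rw [norm_mul]
      calc ‖f' x‖ * ‖E x‖ ≤ ‖f' x‖ * 1 :=
            mul_le_mul_of_nonneg_left (hEbnd x hx) (norm_nonneg _)
        _ = ‖f' x‖ := mul_one _
  have hint_sum : IntegrableOn
      (fun x => f' x * E x + f x * (Complex.I * z * E x)) (Set.Ioi r) := by
    apply hint_f'E.add
    have : (fun x => f x * (Complex.I * z * E x))
        = fun x => (Complex.I * z) * (f x * E x) := by
      funext x; ring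
    rw [this]
    exact hint_fE.const_mul _
  -- limit at infinity
  have htend : Tendsto (fun x => f x * E x) atTop (nhds 0) := by
    apply squeeze_zero_norm' (a := fun x => ‖f x‖)
    · filter_upwards [eventually_ge_atTop (0:ℝ)] with x hx
      rw [norm_mul, hEnorm]
      calc ‖f x‖ * Real.exp (-(z.im * x)) ≤ ‖f x‖ * 1 := by
            apply mul_le_mul_of_nonneg_left _ (norm_nonneg _)
            rw [Real.exp_le_one_iff, neg_nonpos]
            positivity
        _ = ‖f x‖ := mul_one _
    · have h0 : Tendsto (fun y => f y) (Filter.cocompact ℝ) (nhds 0) :=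
        zero_at_infty f
      simpa using (h0.mono_left atTop_le_cocompact).norm
  -- f vanishes at r
  have hfr : f r = 0 := by
    by_contra h
    exact absurd (hsupp (Function.mem_support.2 h)) (lt_irrefl r)
  -- FTC on (r, ∞)
  have key : (∫ x in Set.Ioi r, (f' x * E x + f x * (Complex.I * z * E x)))
      = 0 - (f r * E r) :=
    integral_Ioi_of_hasDerivAt_of_tendsto
      ((f.continuous.mul hEcont).continuousWithinAt)
      (fun x _ => hg x) hint_sum htend
  rw [hfr, zero_mul, sub_zero] at key
  have hsplit : (∫ x in Set.Ioi r, f' x * E x)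
      + (Complex.I * z) * (∫ x in Set.Ioi r, f x * E x) = 0 := by
    have h1 : (∫ x in Set.Ioi r, f x * (Complex.I * z * E x))
        = (Complex.I * z) * ∫ x in Set.Ioi r, f x * E x := by
      rw [← MeasureTheory.integral_const_mul]
      congr 1; funext x; ring
    rw [← h1, ← integral_add hint_f'E]
    · exact key
    · have : (fun x => f x * (Complex.I * z * E x))
          = fun x => (Complex.I * z) * (f x * E x) := by funext x; ring
      rw [this]
      exact hint_fE.const_mul _
  -- the full-line integral equals the Ioi integral
  have hred : (∫ x : ℝ, f x * E x) = ∫ x in Set.Ioi r, f x * E x := by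
    symm
    apply setIntegral_eq_integral_of_forall_compl_eq_zero
    intro x hx
    have : f x = 0 := by
      by_contra h
      exact hx (hsupp (Function.mem_support.2 h))
    rw [this, zero_mul]
  -- express via the derivative integral
  have hiz : Complex.I * z ≠ 0 := mul_ne_zero Complex.I_ne_zero hz0
  have hval : (∫ x : ℝ, f x * E x)
      = -(Complex.I * z)⁻¹ * ∫ x in Set.Ioi r, f' x * E x := by
    rw [hred]
    field_simp
    linear_combination hsplit
  -- the norm of the derivative integral
  have hnorm1 : ‖∫ x in Set.Ioi r, f' x * E x‖
      ≤ Real.exp (-(r * z.im)) * ∫ x : ℝ, ‖f' x‖ := by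
    calc ‖∫ x in Set.Ioi r, f' x * E x‖
        ≤ ∫ x in Set.Ioi r, ‖f' x * E x‖ := norm_integral_le_integral_norm _
      _ ≤ ∫ x in Set.Ioi r, Real.exp (-(r * z.im)) * ‖f' x‖ := by
          apply integral_mono_of_nonneg
          · filter_upwards with x; positivity
          · exact (f'.integrable.norm.restrict.const_mul _)
          · filter_upwards [ae_restrict_mem measurableSet_Ioi] with x hx
            rw [norm_mul, hEnorm, mul_comm (Real.exp _) ‖f' x‖]
            apply mul_le_mul_of_nonneg_left _ (norm_nonneg _)
            apply Real.exp_le_exp.2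
            rw [neg_le_neg_iff, mul_comm r z.im]
            exact mul_le_mul_of_nonneg_left (le_of_lt hx) hzim0
      _ = Real.exp (-(r * z.im)) * ∫ x in Set.Ioi r, ‖f' x‖ :=
          MeasureTheory.integral_const_mul _ _
      _ ≤ Real.exp (-(r * z.im)) * ∫ x : ℝ, ‖f' x‖ := by
          apply mul_le_mul_of_nonneg_left _ (Real.exp_nonneg _)
          apply setIntegral_le_integral f'.integrable.norm
          filter_upwards with x; positivity
  -- assemble
  have hnorm_inv : ‖(Complex.I * z)⁻¹‖ = (Real.exp β)⁻¹ := by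
    rw [norm_inv, norm_mul, Complex.norm_I, one_mul, hzabs]
  have hEβ : (0:ℝ) < Real.exp β := Real.exp_pos β
  have hre : Complex.exp ((β : ℂ) + (lam : ℂ) * Complex.I) = z := rfl
  rw [hatPlusC]
  rw [show (∫ x : ℝ, f x * Complex.exp
      (Complex.I * Complex.exp ((β : ℂ) + (lam : ℂ) * Complex.I) * x))
      = ∫ x : ℝ, f x * E x from rfl]
  rw [hval]
  rw [norm_mul, norm_mul, norm_mul, norm_mul]
  have hsqrt : ‖((Real.sqrt (2 * Real.pi) : ℝ) : ℂ)‖ = Real.sqrt (2 * Real.pi) := by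
    rw [Complex.norm_real, Real.norm_eq_abs, _root_.abs_of_nonneg (Real.sqrt_nonneg _)]
  rw [Complex.norm_I, one_mul, hre, hzabs, norm_neg,
    hnorm_inv, norm_inv, hsqrt]
  have hrim : r * Real.exp β * Real.sin lam = r * z.im := by rw [hzim]; ring
  rw [hrim]
  calc Real.exp β * ((Real.sqrt (2 * Real.pi))⁻¹ *
        ((Real.exp β)⁻¹ * ‖∫ x in Set.Ioi r, f' x * E x‖))
      = (Real.sqrt (2 * Real.pi))⁻¹ * ‖∫ x in Set.Ioi r, f' x * E x‖ := by
        field_simp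
    _ ≤ (Real.sqrt (2 * Real.pi))⁻¹ *
        (Real.exp (-(r * z.im)) * ∫ x : ℝ, ‖f' x‖) := by
        apply mul_le_mul_of_nonneg_left hnorm1 (by positivity)
    _ = (Real.sqrt (2 * Real.pi))⁻¹ * (∫ x : ℝ, ‖f' x‖) *
        Real.exp (-(r * z.im)) := by ring
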